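/- Let X and Y be real normed spaces and P : X → X a continuous linear projection (P ∘ P = P). Let χ : ℝ → ℝ satisfy: χ(y) = 1 for y ≤ 1; 0 ≤ χ(y) ≤ 1 for all y; χ(y) = 0 for y ≥ 2; and |χ(y₁) − χ(y₂)| ≤ 2|y₁ − y₂| for all y₁, y₂ ∈ ℝ. Let R : X → Y be continuously Fréchet differentiable with R(0) = 0 and DR(0) = 0. For ρ > 0 define R_ρ : X → Y by R_ρ(u) := χ(‖Pu‖/ρ)·χ(‖u − Pu‖/ρ) • R(u). Then: (i) R_ρ(u) = 0 whenever ‖u‖ ≥ 4ρ; (ii) R_ρ is globally Lipschitz, with Lipschitz constant at most (1 + 8(1 + 2‖P‖))·L whenever L is a Lipschitz constant of R on the closed ball of radius 4ρ centered at 0; (iii) for every ε > 0 there exists ρ₀ > 0 such that for every ρ ∈ (0, ρ₀] the map R_ρ is globally Lipschitz with Lipschitz constant ε. -/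

import Mathlib

set_option maxHeartbeats 1000000 in
/-- Lemma 6.1 of the paper: properties of the cut-off nonlinearity `R_ρ`. -/
theorem cutoff_nonlinearity {X Y : Type*} [NormedAddCommGroup X] [NormedSpace ℝ X]
    [NormedAddCommGroup Y] [NormedSpace ℝ Y]
    (P : X →L[ℝ] X) (hPproj : ∀ x : X, P (P x) = P x)
    (χ : ℝ → ℝ)
    (hχ1 : ∀ y : ℝ, y ≤ 1 → χ y = 1)
    (hχ01 : ∀ y : ℝ, 0 ≤ χ y ∧ χ y ≤ 1)
    (hχ0 : ∀ y : ℝ, 2 ≤ y → χ y = 0)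
    (hχlip : ∀ y₁ y₂ : ℝ, |χ y₁ - χ y₂| ≤ 2 * |y₁ - y₂|)
    (R : X → Y) (hR : ContDiff ℝ 1 R) (hR0 : R 0 = 0)
    (hDR0 : fderiv ℝ R 0 = 0)
    (Rρ : ℝ → X → Y)
    (hRρ : ∀ ρ : ℝ, ∀ u : X,
      Rρ ρ u = (χ (‖P u‖ / ρ) * χ (‖u - P u‖ / ρ)) • R u) :
    (∀ ρ : ℝ, 0 < ρ → ∀ u : X, 4 * ρ ≤ ‖u‖ → Rρ ρ u = 0) ∧
    (∀ ρ : ℝ, 0 < ρ → ∀ L : ℝ,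
      (∀ u v : X, ‖u‖ ≤ 4 * ρ → ‖v‖ ≤ 4 * ρ → ‖R u - R v‖ ≤ L * ‖u - v‖) →
      ∀ u v : X, ‖Rρ ρ u - Rρ ρ v‖ ≤ (1 + 8 * (1 + 2 * ‖P‖)) * L * ‖u - v‖) ∧
    (∀ ε : ℝ, 0 < ε → ∃ ρ₀ : ℝ, 0 < ρ₀ ∧ ∀ ρ : ℝ, 0 < ρ → ρ ≤ ρ₀ →
      ∀ u v : X, ‖Rρ ρ u - Rρ ρ v‖ ≤ ε * ‖u - v‖) := by
  -- notation
  set p := ‖P‖ with hp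
  have hp0 : 0 ≤ p := norm_nonneg _
  -- the cutoff vanishes outside the ball of radius 4ρ
  have key0 : ∀ ρ : ℝ, 0 < ρ → ∀ u : X, 4 * ρ ≤ ‖u‖ →
      χ (‖P u‖ / ρ) * χ (‖u - P u‖ / ρ) = 0 := by
    intro ρ hρ u hu
    have hsum : ‖u‖ ≤ ‖P u‖ + ‖u - P u‖ := by
      calc ‖u‖ = ‖P u + (u - P u)‖ := by congr 1; abel
        _ ≤ ‖P u‖ + ‖u - P u‖ := norm_add_le _ _
    rcases le_or_gt (2 * ρ) ‖P u‖ with h | h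
    · have : χ (‖P u‖ / ρ) = 0 := hχ0 _ ((le_div_iff₀ hρ).mpr (by linarith))
      rw [this, zero_mul]
    · have : χ (‖u - P u‖ / ρ) = 0 := hχ0 _ ((le_div_iff₀ hρ).mpr (by linarith))
      rw [this, mul_zero]
  -- support bound
  have hsupp : ∀ ρ : ℝ, 0 < ρ → ∀ u : X,
      χ (‖P u‖ / ρ) * χ (‖u - P u‖ / ρ) ≠ 0 → ‖u‖ ≤ 4 * ρ := by
    intro ρ hρ u h
    by_contra hc
    exact h (key0 ρ hρ u (le_of_lt (not_le.mp hc)))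
  -- cutoff bounds
  have hξ01 : ∀ ρ : ℝ, ∀ u : X, 0 ≤ χ (‖P u‖ / ρ) * χ (‖u - P u‖ / ρ) ∧
      χ (‖P u‖ / ρ) * χ (‖u - P u‖ / ρ) ≤ 1 := by
    intro ρ u
    obtain ⟨h1, h2⟩ := hχ01 (‖P u‖ / ρ)
    obtain ⟨h3, h4⟩ := hχ01 (‖u - P u‖ / ρ)
    exact ⟨mul_nonneg h1 h3, mul_le_one₀ h2 h3 h4⟩
  -- Lipschitz constant of the cutoff
  have hξlip : ∀ ρ : ℝ, 0 < ρ → ∀ u v : X,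
      |χ (‖P u‖ / ρ) * χ (‖u - P u‖ / ρ) - χ (‖P v‖ / ρ) * χ (‖v - P v‖ / ρ)|
        ≤ 2 * (1 + 2 * p) / ρ * ‖u - v‖ := by
    intro ρ hρ u v
    set a₁ := χ (‖P u‖ / ρ); set a₂ := χ (‖u - P u‖ / ρ)
    set b₁ := χ (‖P v‖ / ρ); set b₂ := χ (‖v - P v‖ / ρ)
    set d := ‖u - v‖ with hd
    have hd0 : 0 ≤ d := norm_nonneg _
    have h1 : |a₁ - b₁| ≤ 2 * (p * d / ρ) := by
      have := hχlip (‖P u‖ / ρ) (‖P v‖ / ρ)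
      have heq : |‖P u‖ / ρ - ‖P v‖ / ρ| = |‖P u‖ - ‖P v‖| / ρ := by
        rw [div_sub_div_same, abs_div, abs_of_pos hρ]
      have h2 : |‖P u‖ - ‖P v‖| ≤ p * d := by
        calc |‖P u‖ - ‖P v‖| ≤ ‖P u - P v‖ := abs_norm_sub_norm_le _ _
          _ = ‖P (u - v)‖ := by rw [map_sub]
          _ ≤ p * d := P.le_opNorm _
      calc |a₁ - b₁| ≤ 2 * (|‖P u‖ - ‖P v‖| / ρ) := by rw [← heq]; exact this
        _ ≤ 2 * (p * d / ρ) := by gcongr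
    have h2 : |a₂ - b₂| ≤ 2 * ((d + p * d) / ρ) := by
      have := hχlip (‖u - P u‖ / ρ) (‖v - P v‖ / ρ)
      have heq : |‖u - P u‖ / ρ - ‖v - P v‖ / ρ| = |‖u - P u‖ - ‖v - P v‖| / ρ := by
        rw [div_sub_div_same, abs_div, abs_of_pos hρ]
      have h3 : |‖u - P u‖ - ‖v - P v‖| ≤ d + p * d := by
        calc |‖u - P u‖ - ‖v - P v‖| ≤ ‖(u - P u) - (v - P v)‖ := abs_norm_sub_norm_le _ _
          _ = ‖(u - v) - P (u - v)‖ := by rw [map_sub]; congr 1; abel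
          _ ≤ ‖u - v‖ + ‖P (u - v)‖ := norm_sub_le _ _
          _ ≤ d + p * d := by gcongr; exact P.le_opNorm _
      calc |a₂ - b₂| ≤ 2 * (|‖u - P u‖ - ‖v - P v‖| / ρ) := by rw [← heq]; exact this
        _ ≤ 2 * ((d + p * d) / ρ) := by gcongr
    have ha₂ : |a₂| ≤ 1 := abs_le.mpr ⟨by linarith [(hχ01 (‖u - P u‖ / ρ)).1],
      (hχ01 (‖u - P u‖ / ρ)).2⟩
    have hb₁ : |b₁| ≤ 1 := abs_le.mpr ⟨by linarith [(hχ01 (‖P v‖ / ρ)).1],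
      (hχ01 (‖P v‖ / ρ)).2⟩
    have hsplit : |a₁ * a₂ - b₁ * b₂| ≤ |a₁ - b₁| * |a₂| + |b₁| * |a₂ - b₂| := by
      calc |a₁ * a₂ - b₁ * b₂| = |(a₁ - b₁) * a₂ + b₁ * (a₂ - b₂)| := by ring_nf
        _ ≤ |(a₁ - b₁) * a₂| + |b₁ * (a₂ - b₂)| := abs_add_le _ _
        _ = |a₁ - b₁| * |a₂| + |b₁| * |a₂ - b₂| := by rw [abs_mul, abs_mul]
    have hfin : 2 * (p * d / ρ) + 2 * ((d + p * d) / ρ) = 2 * (1 + 2 * p) / ρ * d := by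
      field_simp; ring
    calc |a₁ * a₂ - b₁ * b₂| ≤ |a₁ - b₁| * |a₂| + |b₁| * |a₂ - b₂| := hsplit
      _ ≤ 2 * (p * d / ρ) * 1 + 1 * (2 * ((d + p * d) / ρ)) := by
          apply add_le_add
          · exact mul_le_mul h1 ha₂ (abs_nonneg _) (by positivity)
          · exact mul_le_mul hb₁ h2 (abs_nonneg _) (by norm_num)
      _ = 2 * (p * d / ρ) + 2 * ((d + p * d) / ρ) := by ring
      _ = 2 * (1 + 2 * p) / ρ * d := hfin
  -- part (ii)
  have main2 : ∀ ρ : ℝ, 0 < ρ → ∀ L : ℝ,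
      (∀ u v : X, ‖u‖ ≤ 4 * ρ → ‖v‖ ≤ 4 * ρ → ‖R u - R v‖ ≤ L * ‖u - v‖) →
      ∀ u v : X, ‖Rρ ρ u - Rρ ρ v‖ ≤ (1 + 8 * (1 + 2 * p)) * L * ‖u - v‖ := by
    intro ρ hρ L hL u v
    by_cases huv : u = v
    · subst huv; simp
    -- L is nonnegative
    have hL0 : 0 ≤ L := by
      have hne : ‖u - v‖ ≠ 0 := by
        simpa [sub_eq_zero] using huv
      set w := (4 * ρ) • (‖u - v‖⁻¹ • (u - v)) with hw
      have hwn : ‖w‖ = 4 * ρ := by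
        rw [hw, norm_smul, norm_smul, norm_inv, norm_norm, Real.norm_eq_abs,
          abs_of_pos (by linarith : (0:ℝ) < 4 * ρ)]
        field_simp
      have := hL w 0 (le_of_eq hwn) (by rw [norm_zero]; positivity)
      rw [hR0, sub_zero, sub_zero, hwn] at this
      nlinarith [norm_nonneg (R w)]
    rw [hRρ, hRρ]
    set ξu := χ (‖P u‖ / ρ) * χ (‖u - P u‖ / ρ) with hξu_def
    set ξv := χ (‖P v‖ / ρ) * χ (‖v - P v‖ / ρ) with hξv_def
    set d := ‖u - v‖ with hd
    have hd0 : 0 ≤ d := norm_nonneg _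
    have hLd : 0 ≤ L * d := mul_nonneg hL0 hd0
    have hRbound : ∀ w : X, ‖w‖ ≤ 4 * ρ → ‖R w‖ ≤ L * (4 * ρ) := by
      intro w hwle
      have := hL w 0 hwle (by rw [norm_zero]; positivity)
      rw [hR0, sub_zero, sub_zero] at this
      calc ‖R w‖ ≤ L * ‖w‖ := this
        _ ≤ L * (4 * ρ) := by exact mul_le_mul_of_nonneg_left hwle hL0
    have hkey : 2 * (1 + 2 * p) / ρ * d * (L * (4 * ρ)) = 8 * (1 + 2 * p) * (L * d) := by
      field_simp; ring
    by_cases hu0 : ξu = 0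
    · by_cases hv0 : ξv = 0
      · rw [hu0, hv0]
        simp only [zero_smul, sub_zero, norm_zero]
        nlinarith
      · -- ξu = 0, ξv ≠ 0
        have hvball : ‖v‖ ≤ 4 * ρ := hsupp ρ hρ v hv0
        have h1 : ‖ξu • R u - ξv • R v‖ = |ξv| * ‖R v‖ := by
          rw [hu0, zero_smul, zero_sub, norm_neg, norm_smul, Real.norm_eq_abs]
        have h2 : |ξv| = |ξu - ξv| := by rw [hu0, zero_sub, abs_neg]
        rw [h1, h2]
        calc |ξu - ξv| * ‖R v‖ ≤ (2 * (1 + 2 * p) / ρ * d) * (L * (4 * ρ)) := by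
              apply mul_le_mul (hξlip ρ hρ u v) (hRbound v hvball) (norm_nonneg _)
              positivity
          _ = 8 * (1 + 2 * p) * (L * d) := hkey
          _ ≤ (1 + 8 * (1 + 2 * p)) * L * d := by nlinarith
    · by_cases hv0 : ξv = 0
      · have huball : ‖u‖ ≤ 4 * ρ := hsupp ρ hρ u hu0
        have h1 : ‖ξu • R u - ξv • R v‖ = |ξu| * ‖R u‖ := by
          rw [hv0, zero_smul, sub_zero, norm_smul, Real.norm_eq_abs]
        have h2 : |ξu| = |ξu - ξv| := by rw [hv0, sub_zero]
        rw [h1, h2]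
        calc |ξu - ξv| * ‖R u‖ ≤ (2 * (1 + 2 * p) / ρ * d) * (L * (4 * ρ)) := by
              apply mul_le_mul (hξlip ρ hρ u v) (hRbound u huball) (norm_nonneg _)
              positivity
          _ = 8 * (1 + 2 * p) * (L * d) := hkey
          _ ≤ (1 + 8 * (1 + 2 * p)) * L * d := by nlinarith
      · -- both nonzero: both in ball
        have huball : ‖u‖ ≤ 4 * ρ := hsupp ρ hρ u hu0
        have hvball : ‖v‖ ≤ 4 * ρ := hsupp ρ hρ v hv0
        have hsp : ξu • R u - ξv • R v = ξu • (R u - R v) + (ξu - ξv) • R v := by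
          rw [smul_sub, sub_smul]; abel
        have hξu1 : |ξu| ≤ 1 := abs_le.mpr ⟨by linarith [(hξ01 ρ u).1], (hξ01 ρ u).2⟩
        calc ‖ξu • R u - ξv • R v‖ = ‖ξu • (R u - R v) + (ξu - ξv) • R v‖ := by rw [hsp]
          _ ≤ ‖ξu • (R u - R v)‖ + ‖(ξu - ξv) • R v‖ := norm_add_le _ _
          _ = |ξu| * ‖R u - R v‖ + |ξu - ξv| * ‖R v‖ := by
              rw [norm_smul, norm_smul, Real.norm_eq_abs, Real.norm_eq_abs]
          _ ≤ 1 * (L * d) + (2 * (1 + 2 * p) / ρ * d) * (L * (4 * ρ)) := by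
              apply add_le_add
              · exact mul_le_mul hξu1 (hL u v huball hvball) (norm_nonneg _) (by norm_num)
              · apply mul_le_mul (hξlip ρ hρ u v) (hRbound v hvball) (norm_nonneg _)
                positivity
          _ = L * d + 8 * (1 + 2 * p) * (L * d) := by rw [hkey]; ring
          _ = (1 + 8 * (1 + 2 * p)) * L * d := by ring
  refine ⟨?_, main2, ?_⟩
  · intro ρ hρ u hu
    rw [hRρ, key0 ρ hρ u hu, zero_smul]
  · -- part (iii)
    intro ε hε
    set c : ℝ := 1 + 8 * (1 + 2 * p) with hc
    have hc1 : (1:ℝ) ≤ c := by rw [hc]; nlinarith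
    have hcpos : 0 < c := by linarith
    set ε' : ℝ := ε / c with hε'
    have hε'pos : 0 < ε' := div_pos hε hcpos
    have hcont : ContinuousAt (fderiv ℝ R) 0 := (hR.continuous_fderiv one_ne_zero).continuousAt
    rw [Metric.continuousAt_iff] at hcont
    obtain ⟨δ, hδpos, hδ⟩ := hcont ε' hε'pos
    refine ⟨δ / 8, by positivity, ?_⟩
    intro ρ hρ hρle u v
    have hLip : ∀ x y : X, ‖x‖ ≤ 4 * ρ → ‖y‖ ≤ 4 * ρ → ‖R x - R y‖ ≤ ε' * ‖x - y‖ := by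
      intro x y hx hy
      have hball : ∀ z : X, z ∈ Metric.closedBall (0:X) (4 * ρ) → ‖fderiv ℝ R z‖ ≤ ε' := by
        intro z hz
        rw [Metric.mem_closedBall, dist_zero_right] at hz
        have hzδ : dist z 0 < δ := by
          rw [dist_zero_right]
          calc ‖z‖ ≤ 4 * ρ := hz
            _ ≤ 4 * (δ / 8) := by linarith
            _ < δ := by linarith
        have := hδ hzδ
        rw [hDR0, dist_zero_right] at this
        exact le_of_lt this
      exact (convex_closedBall (0:X) (4 * ρ)).norm_image_sub_le_of_norm_fderiv_le
        (fun z _ => (hR.differentiable one_ne_zero).differentiableAt) hball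
        (by rwa [Metric.mem_closedBall, dist_zero_right]) (by rwa [Metric.mem_closedBall, dist_zero_right])
    have := main2 ρ hρ ε' hLip u v
    calc ‖Rρ ρ u - Rρ ρ v‖ ≤ c * ε' * ‖u - v‖ := this
      _ = ε * ‖u - v‖ := by rw [hε', mul_div_cancel₀ _ (ne_of_gt hcpos)]
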